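/- Let n ≥ 1 and let A be a finite subset of ℝⁿ. For γ ∈ A let V_γ = {u ∈ ℝⁿ : ⟨δ, u⟩ ≤ ⟨γ, u⟩ for all δ ∈ A}, and for α, β ∈ A let H(α, β) = {u ∈ ℝⁿ : ⟨α, u⟩ = ⟨β, u⟩}. Then there exists c > 0 such that for all α, β ∈ A with α ≠ β, every p ∈ V_β, and every r > 0: if the Euclidean distance from p to the set V_α is at least r, then the Euclidean distance from p to the set H(α, β) is at least 2·c·r. -/

import Mathlib

open Finset Metric
open scoped RealInnerProductSpace

section Aux

variable {F : Type*} [NormedAddCommGroup F] [InnerProductSpace ℝ F]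

/-- The cone of nonnegative combinations of a finite set. -/
def coneOf (G : Finset F) : Set F :=
  {x | ∃ l : F → ℝ, (∀ g ∈ G, 0 ≤ l g) ∧ ∑ g ∈ G, l g • g = x}

lemma zero_mem_coneOf (G : Finset F) : (0 : F) ∈ coneOf G :=
  ⟨0, fun _ _ => le_rfl, by simp⟩

lemma mem_coneOf_of_mem {G : Finset F} {g : F} (hg : g ∈ G) : g ∈ coneOf G := by
  classical
  refine ⟨fun x => if x = g then 1 else 0, fun x _ => by positivity, ?_⟩
  have : ∀ x ∈ G, (if x = g then (1:ℝ) else 0) • x = if x = g then x else 0 := by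
    intro x _; split <;> simp
  rw [Finset.sum_congr rfl this, Finset.sum_ite_eq' G g (fun x => x), if_pos hg]

lemma coneOf_mono {S G : Finset F} (h : S ⊆ G) : coneOf S ⊆ coneOf G := by
  classical
  rintro x ⟨l, hl, rfl⟩
  refine ⟨fun g => if g ∈ S then l g else 0, ?_, ?_⟩
  · intro g _
    by_cases hgS : g ∈ S
    · simpa [hgS] using hl g hgS
    · simp [hgS]
  · rw [← Finset.sum_subset h (fun x _ hx => by simp [hx])]
    exact Finset.sum_congr rfl fun x hx => by simp [hx]

lemma add_mem_coneOf {G : Finset F} {x y : F} (hx : x ∈ coneOf G) (hy : y ∈ coneOf G) :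
    x + y ∈ coneOf G := by
  obtain ⟨l, hl, rfl⟩ := hx
  obtain ⟨m, hm, rfl⟩ := hy
  exact ⟨l + m, fun g hg => add_nonneg (hl g hg) (hm g hg), by
    simp [add_smul, Finset.sum_add_distrib]⟩

lemma smul_mem_coneOf {G : Finset F} {x : F} {c : ℝ} (hc : 0 ≤ c) (hx : x ∈ coneOf G) :
    c • x ∈ coneOf G := by
  obtain ⟨l, hl, rfl⟩ := hx
  exact ⟨fun g => c * l g, fun g hg => mul_nonneg hc (hl g hg), by
    simp [Finset.smul_sum, smul_smul]⟩

lemma caratheodory_aux : ∀ (N : ℕ) (G : Finset F), G.card ≤ N → ∀ x ∈ coneOf G,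
    ∃ S, S ⊆ G ∧ LinearIndependent ℝ (fun i : {a // a ∈ S} => (i : F)) ∧ x ∈ coneOf S := by
  classical
  intro N
  induction N with
  | zero =>
    intro G hG x hx
    rw [Nat.le_zero, Finset.card_eq_zero] at hG
    subst hG
    haveI : IsEmpty {a // a ∈ (∅ : Finset F)} := by
      simp [Finset.isEmpty_coe_sort]
      infer_instance
    exact ⟨∅, Finset.Subset.refl _, linearIndependent_empty_type, hx⟩
  | succ N ih =>
    intro G hG x hx
    by_cases hli : LinearIndependent ℝ (fun i : {a // a ∈ G} => (i : F))
    · exact ⟨G, Finset.Subset.refl _, hli, hx⟩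
    obtain ⟨c, hcsum, i0, hi0⟩ := Fintype.not_linearIndependent_iff.mp hli
    have key : ∃ c : {a // a ∈ G} → ℝ, (∑ i, c i • (i : F)) = 0 ∧ ∃ i, 0 < c i := by
      rcases lt_or_gt_of_ne hi0 with h | h
      · exact ⟨-c, by simpa using hcsum, i0, by simpa using h⟩
      · exact ⟨c, hcsum, i0, h⟩
    clear hcsum hi0 hli
    obtain ⟨c, hcsum, i1, hi1⟩ := key
    obtain ⟨l, hl, rfl⟩ := hx
    set cE : F → ℝ := fun y => if h : y ∈ G then c ⟨y, h⟩ else 0 with hcE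
    have hcEsum : ∑ g ∈ G, cE g • g = 0 := by
      rw [← Finset.sum_coe_sort G (fun g => cE g • g)]
      rw [← hcsum]
      exact Finset.sum_congr rfl fun i _ => by simp [hcE, i.2]
    have hi1' : (i1 : F) ∈ G.filter (fun g => 0 < cE g) := by
      simp only [Finset.mem_filter]
      exact ⟨i1.2, by simpa [hcE, i1.2] using hi1⟩
    obtain ⟨g0, hg0T, hg0min⟩ :=
      (G.filter (fun g => 0 < cE g)).exists_min_image (fun g => l g / cE g) ⟨i1, hi1'⟩
    simp only [Finset.mem_filter] at hg0T
    set θ : ℝ := l g0 / cE g0 with hθdef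
    have hθ : 0 ≤ θ := div_nonneg (hl g0 hg0T.1) hg0T.2.le
    set l' : F → ℝ := fun y => l y - θ * cE y with hl'def
    have hl' : ∀ g ∈ G, 0 ≤ l' g := by
      intro g hg
      by_cases hcg : 0 < cE g
      · have hmin := hg0min g (Finset.mem_filter.mpr ⟨hg, hcg⟩)
        have : θ * cE g ≤ (l g / cE g) * cE g := mul_le_mul_of_nonneg_right hmin hcg.le
        rw [div_mul_cancel₀ _ hcg.ne'] at this
        simp [hl'def]; linarith
      · have : θ * cE g ≤ 0 := mul_nonpos_of_nonneg_of_nonpos hθ (not_lt.mp hcg)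
        have := hl g hg
        simp [hl'def]; linarith
    have hsum' : ∑ g ∈ G, l' g • g = ∑ g ∈ G, l g • g := by
      simp only [hl'def, sub_smul, mul_smul, Finset.sum_sub_distrib]
      rw [← Finset.smul_sum, hcEsum, smul_zero, sub_zero]
    have hg0zero : l' g0 = 0 := by
      simp [hl'def, hθdef, div_mul_cancel₀ _ hg0T.2.ne']
    have hxerase : (∑ g ∈ G, l g • g) ∈ coneOf (G.erase g0) := by
      refine ⟨l', fun g hg => hl' g (Finset.mem_of_mem_erase hg), ?_⟩
      rw [Finset.sum_erase_eq_sub hg0T.1, hsum', hg0zero, zero_smul, sub_zero]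
    have hcard : (G.erase g0).card ≤ N := by
      have := Finset.card_erase_of_mem hg0T.1
      omega
    obtain ⟨S, hS1, hS2, hS3⟩ := ih (G.erase g0) hcard _ hxerase
    exact ⟨S, hS1.trans (Finset.erase_subset _ _), hS2, hS3⟩


lemma caratheodory (G : Finset F) (x : F) (hx : x ∈ coneOf G) :
    ∃ S, S ⊆ G ∧ LinearIndependent ℝ (fun i : {a // a ∈ S} => (i : F)) ∧ x ∈ coneOf S :=
  caratheodory_aux G.card G le_rfl x hx

set_option maxHeartbeats 1000000 in
lemma indep_bound [FiniteDimensional ℝ F] (S : Finset F)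
    (hS : LinearIndependent ℝ (fun i : {a // a ∈ S} => (i : F))) :
    ∃ m > 0, IsClosed (coneOf S) ∧
      ∀ l : F → ℝ, (∀ g ∈ S, 0 ≤ l g) → ∑ g ∈ S, l g ≤ m * ‖∑ g ∈ S, l g • g‖ := by
  classical
  set T : ({a // a ∈ S} → ℝ) →ₗ[ℝ] F :=
    { toFun := fun l => ∑ i, l i • (i : F)
      map_add' := by intro a b; simp [add_smul, Finset.sum_add_distrib]
      map_smul' := by intro c a; simp [Finset.smul_sum, smul_smul] } with hT
  have hker : LinearMap.ker T = ⊥ := by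
    rw [LinearMap.ker_eq_bot']
    intro v hv
    exact funext (Fintype.linearIndependent_iff.mp hS v hv)
  have hemb := LinearMap.isClosedEmbedding_of_injective hker
  have horth : IsClosed {l : {a // a ∈ S} → ℝ | ∀ i, 0 ≤ l i} := by
    have : {l : {a // a ∈ S} → ℝ | ∀ i, 0 ≤ l i} = ⋂ i, {l | 0 ≤ l i} := by
      ext; simp [Set.mem_iInter]
    rw [this]
    exact isClosed_iInter fun i => isClosed_le continuous_const (continuous_apply i)
  have himage : coneOf S = T '' {l | ∀ i, 0 ≤ l i} := by
    ext x
    constructor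
    · rintro ⟨l, hl, rfl⟩
      refine ⟨fun i => l i, fun i => hl i i.2, ?_⟩
      simp only [hT, LinearMap.coe_mk, AddHom.coe_mk]
      exact Finset.sum_coe_sort S (fun g => l g • g)
    · rintro ⟨l, hl, rfl⟩
      refine ⟨fun y => if h : y ∈ S then l ⟨y, h⟩ else 0, fun g hg => by simp [hg]; exact hl _, ?_⟩
      simp only [hT, LinearMap.coe_mk, AddHom.coe_mk]
      rw [← Finset.sum_coe_sort S (fun g => (if h : g ∈ S then l ⟨g, h⟩ else 0) • g)]
      exact Finset.sum_congr rfl fun i _ => by simp [i.2]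
  -- the inverse bound
  have hinj : Function.Injective T := LinearMap.ker_eq_bot.mp hker
  set e := LinearEquiv.ofInjective T hinj with he
  have hcont : Continuous (e.symm.toLinearMap) := LinearMap.continuous_of_finiteDimensional _
  obtain ⟨Cf, hCfpos, hCf⟩ := SemilinearMapClass.bound_of_continuous e.symm.toLinearMap hcont
  have hmpos : (0:ℝ) < (S.card : ℝ) * Cf + 1 :=
    add_pos_of_nonneg_of_pos (mul_nonneg (Nat.cast_nonneg _) hCfpos.le) one_pos
  refine ⟨(S.card : ℝ) * Cf + 1, hmpos, ?_, ?_⟩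
  · rw [himage]; exact hemb.isClosedMap _ horth
  intro l hl
  set v : {a // a ∈ S} → ℝ := fun i => l i with hv
  have hTv : T v = ∑ g ∈ S, l g • g := Finset.sum_coe_sort S (fun g => l g • g)
  have hnorm : ‖v‖ ≤ Cf * ‖T v‖ := by
    have hvval : e.symm ⟨T v, LinearMap.mem_range_self T v⟩ = v := by
      rw [LinearEquiv.symm_apply_eq]
      exact Subtype.ext (LinearEquiv.ofInjective_apply T v).symm
    calc ‖v‖ = ‖e.symm ⟨T v, LinearMap.mem_range_self T v⟩‖ := by rw [hvval]
    _ ≤ Cf * ‖(⟨T v, LinearMap.mem_range_self T v⟩ : LinearMap.range T)‖ := hCf _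
    _ = Cf * ‖T v‖ := rfl
  have hsum : ∑ g ∈ S, l g ≤ (S.card : ℝ) * ‖v‖ := by
    rw [← Finset.sum_coe_sort S l]
    calc ∑ i : {a // a ∈ S}, l i ≤ ∑ i : {a // a ∈ S}, ‖v‖ := by
          refine Finset.sum_le_sum fun i _ => ?_
          calc l i ≤ |l i| := le_abs_self _
          _ = ‖v i‖ := rfl
          _ ≤ ‖v‖ := norm_le_pi_norm v i
    _ = (S.card : ℝ) * ‖v‖ := by simp [Finset.card_univ, mul_comm]
  have hTvnn : (0:ℝ) ≤ ‖T v‖ := norm_nonneg _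
  have hvnn : (0:ℝ) ≤ ‖v‖ := norm_nonneg _
  calc ∑ g ∈ S, l g ≤ (S.card : ℝ) * ‖v‖ := hsum
  _ ≤ (S.card : ℝ) * (Cf * ‖T v‖) := mul_le_mul_of_nonneg_left hnorm (Nat.cast_nonneg _)
  _ ≤ ((S.card : ℝ) * Cf + 1) * ‖T v‖ := by nlinarith
  _ = ((S.card : ℝ) * Cf + 1) * ‖∑ g ∈ S, l g • g‖ := by rw [hTv]

lemma coneOf_closed_bound [FiniteDimensional ℝ F] (G : Finset F) :
    ∃ m > 0, IsClosed (coneOf G) ∧ ∀ x ∈ coneOf G, ∃ l : F → ℝ,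
      (∀ g ∈ G, 0 ≤ l g) ∧ ∑ g ∈ G, l g • g = x ∧ ∑ g ∈ G, l g ≤ m * ‖x‖ := by
  classical
  have hch : ∀ S : Finset F, ∃ m : ℝ, 0 < m ∧
      (LinearIndependent ℝ (fun i : {a // a ∈ S} => (i : F)) →
        IsClosed (coneOf S) ∧ ∀ l : F → ℝ, (∀ g ∈ S, 0 ≤ l g) →
          ∑ g ∈ S, l g ≤ m * ‖∑ g ∈ S, l g • g‖) := by
    intro S
    by_cases hS : LinearIndependent ℝ (fun i : {a // a ∈ S} => (i : F))
    · obtain ⟨m, hm, h1, h2⟩ := indep_bound S hS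
      exact ⟨m, hm, fun _ => ⟨h1, h2⟩⟩
    · exact ⟨1, one_pos, fun h => absurd h hS⟩
  choose M hMpos hM using hch
  have hPne : (G.powerset).Nonempty := ⟨∅, Finset.empty_mem_powerset G⟩
  refine ⟨G.powerset.sup' hPne M, ?_, ?_, ?_⟩
  · rw [gt_iff_lt, Finset.lt_sup'_iff]
    exact ⟨∅, Finset.empty_mem_powerset G, hMpos ∅⟩
  · have hunion : coneOf G = ⋃ S ∈ G.powerset,
        (if LinearIndependent ℝ (fun i : {a // a ∈ S} => (i : F)) then coneOf S
         else ({0} : Set F)) := by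
      ext x
      simp only [Set.mem_iUnion]
      constructor
      · intro hx
        obtain ⟨S, hSG, hSli, hxS⟩ := caratheodory G x hx
        exact ⟨S, Finset.mem_powerset.mpr hSG, by rw [if_pos hSli]; exact hxS⟩
      · rintro ⟨S, hSP, hxS⟩
        by_cases hSli : LinearIndependent ℝ (fun i : {a // a ∈ S} => (i : F))
        · rw [if_pos hSli] at hxS
          exact coneOf_mono (Finset.mem_powerset.mp hSP) hxS
        · rw [if_neg hSli] at hxS
          rw [Set.mem_singleton_iff.mp hxS]
          exact ⟨0, fun _ _ => le_rfl, by simp⟩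
    rw [hunion]
    refine isClosed_biUnion_finset fun S hSP => ?_
    by_cases hSli : LinearIndependent ℝ (fun i : {a // a ∈ S} => (i : F))
    · rw [if_pos hSli]; exact (hM S hSli).1
    · rw [if_neg hSli]; exact isClosed_singleton
  · intro x hx
    obtain ⟨S, hSG, hSli, l, hl, hsum⟩ := caratheodory G x hx
    refine ⟨fun y => if y ∈ S then l y else 0, ?_, ?_, ?_⟩
    · intro g _
      by_cases hgS : g ∈ S
      · simpa [hgS] using hl g hgS
      · simp [hgS]
    · rw [← Finset.sum_subset hSG (fun y _ hy => by simp [hy])]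
      rw [← hsum]
      exact Finset.sum_congr rfl fun y hy => by simp [hy]
    · rw [← Finset.sum_subset hSG (fun y _ hy => by simp [hy])]
      have h1 : ∑ y ∈ S, (if y ∈ S then l y else 0) = ∑ y ∈ S, l y :=
        Finset.sum_congr rfl fun y hy => by simp [hy]
      rw [h1]
      have h2 := (hM S hSli).2 l hl
      rw [hsum] at h2
      refine h2.trans (mul_le_mul_of_nonneg_right ?_ (norm_nonneg x))
      exact Finset.le_sup' M (Finset.mem_powerset.mpr hSG)

lemma dual_eq [FiniteDimensional ℝ F] (G : Finset F) :
    ((ProperCone.innerDual {u : F | ∀ g ∈ G, 0 ≤ ⟪g, u⟫}) : Set F) = coneOf G := by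
  have hclosed : IsClosed (coneOf G) := (coneOf_closed_bound G).choose_spec.2.1
  let CC : ProperCone ℝ F :=
    { carrier := coneOf G
      add_mem' := fun hx hy => add_mem_coneOf hx hy
      zero_mem' := zero_mem_coneOf G
      smul_mem' := fun c x hx => smul_mem_coneOf c.2 hx
      isClosed' := hclosed }
  have h1 : (ProperCone.innerDual (CC : Set F) : Set F) = {u : F | ∀ g ∈ G, 0 ≤ ⟪g, u⟫} := by
    ext u
    constructor
    · intro hu g hg
      exact (ProperCone.mem_innerDual).mp hu (mem_coneOf_of_mem hg)
    · intro hu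
      rw [SetLike.mem_coe, ProperCone.mem_innerDual]
      rintro x ⟨l, hl, rfl⟩
      rw [sum_inner]
      refine Finset.sum_nonneg fun g hg => ?_
      rw [real_inner_smul_left]
      exact mul_nonneg (hl g hg) (hu g hg)
  rw [← h1]
  rw [ProperCone.innerDual_innerDual]
  rfl
lemma hoffman [FiniteDimensional ℝ F] (G : Finset F) :
    ∃ m > 0, ∀ (p : F) (s : ℝ), 0 ≤ s → (∀ g ∈ G, -⟪g, p⟫ ≤ s) →
      Metric.infDist p {u : F | ∀ g ∈ G, 0 ≤ ⟪g, u⟫} ≤ m * s := by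
  haveI : ProperSpace F := FiniteDimensional.proper ℝ F
  obtain ⟨m, hm, _, hbound⟩ := coneOf_closed_bound G
  refine ⟨m, hm, ?_⟩
  intro p s hs hps
  set K : Set F := {u : F | ∀ g ∈ G, 0 ≤ ⟪g, u⟫} with hK
  have hKne : K.Nonempty := ⟨0, fun g _ => by rw [inner_zero_right]⟩
  have hKclosed : IsClosed K := by
    have : K = ⋂ g ∈ G, {u : F | 0 ≤ ⟪g, u⟫} := by
      ext u; simp [hK, Set.mem_iInter]
    rw [this]
    refine isClosed_biInter fun g _ => ?_
    exact isClosed_le continuous_const (Continuous.inner continuous_const continuous_id)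
  have hKconv : Convex ℝ K := by
    intro x hx y hy a b ha hb hab
    intro g hg
    rw [inner_add_right, real_inner_smul_right, real_inner_smul_right]
    exact add_nonneg (mul_nonneg ha (hx g hg)) (mul_nonneg hb (hy g hg))
  obtain ⟨q, hqK, hqd⟩ := hKclosed.exists_infDist_eq_dist hKne p
  have hmin : ∀ w ∈ K, ‖p - q‖ ≤ ‖p - w‖ := by
    intro w hw
    rw [← dist_eq_norm, ← dist_eq_norm, ← hqd]
    exact infDist_le_dist_of_mem hw
  haveI : Nonempty ↑K := hKne.to_subtype
  have hiInf : ‖p - q‖ = ⨅ w : K, ‖p - w‖ := by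
    refine le_antisymm (le_ciInf fun w => hmin w w.2) ?_
    exact ciInf_le ⟨0, by rintro b ⟨w, rfl⟩; exact norm_nonneg _⟩ (⟨q, hqK⟩ : K)
  have hobtuse := (norm_eq_iInf_iff_real_inner_le_zero hKconv hqK).mp hiInf
  have h1 : ∀ v ∈ K, ⟪p - q, v⟫ ≤ 0 := by
    intro v hv
    have hvq : v + q ∈ K := fun g hg => by
      rw [inner_add_right]; exact add_nonneg (hv g hg) (hqK g hg)
    have := hobtuse (v + q) hvq
    rwa [add_sub_cancel_right] at this
  have h2 : ⟪p - q, q⟫ = 0 := by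
    refine le_antisymm (h1 q hqK) ?_
    have := hobtuse 0 (fun g _ => by rw [inner_zero_right])
    rw [zero_sub, inner_neg_right] at this
    linarith
  have hdual : q - p ∈ coneOf G := by
    rw [← dual_eq G]
    rw [SetLike.mem_coe, ProperCone.mem_innerDual]
    intro x hx
    have h3 : ⟪x, q - p⟫ = -⟪p - q, x⟫ := by
      rw [real_inner_comm, ← neg_sub p q, inner_neg_left]
    rw [h3]
    have := h1 x hx
    linarith
  obtain ⟨l, hl, hlsum, hlbound⟩ := hbound (q - p) hdual
  have hqp : ‖q - p‖ = ‖p - q‖ := norm_sub_rev q p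
  have key : ‖p - q‖ ^ 2 ≤ m * s * ‖p - q‖ := by
    have e1 : ‖p - q‖ ^ 2 = ⟪p - q, p - q⟫ := (real_inner_self_eq_norm_sq _).symm
    have e2 : ⟪p - q, p - q⟫ = ⟪p - q, p⟫ := by
      rw [inner_sub_right, h2, sub_zero]
    have e3 : ⟪q - p, p⟫ = ∑ g ∈ G, l g * ⟪g, p⟫ := by
      rw [← hlsum, sum_inner]
      exact Finset.sum_congr rfl fun g _ => real_inner_smul_left _ _ _
    have e4 : ⟪p - q, p⟫ = ∑ g ∈ G, l g * (-⟪g, p⟫) := by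
      rw [← neg_sub q p, inner_neg_left, e3, ← Finset.sum_neg_distrib]
      exact Finset.sum_congr rfl fun g _ => by ring
    have e5 : ∑ g ∈ G, l g * (-⟪g, p⟫) ≤ ∑ g ∈ G, l g * s :=
      Finset.sum_le_sum fun g hg => mul_le_mul_of_nonneg_left (hps g hg) (hl g hg)
    have e6 : ∑ g ∈ G, l g * s = (∑ g ∈ G, l g) * s := (Finset.sum_mul _ _ _).symm
    have e7 : (∑ g ∈ G, l g) * s ≤ m * ‖q - p‖ * s :=
      mul_le_mul_of_nonneg_right hlbound hs
    rw [e1, e2, e4]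
    rw [hqp] at e7
    calc ∑ g ∈ G, l g * (-⟪g, p⟫) ≤ (∑ g ∈ G, l g) * s := e6 ▸ e5
    _ ≤ m * ‖p - q‖ * s := e7
    _ = m * s * ‖p - q‖ := by ring
  have hd : ‖p - q‖ ≤ m * s := by
    rcases eq_or_lt_of_le (norm_nonneg (p - q)) with h | h
    · rw [← h]; positivity
    · nlinarith
  rw [hqd, dist_eq_norm]
  exact hd




lemma perpair [FiniteDimensional ℝ F] (A : Finset F) (α β : F) (hα : α ∈ A) (hβ : β ∈ A)
    (hne : α ≠ β) :
    ∃ c > (0:ℝ), ∀ p ∈ {u : F | ∀ δ ∈ A, ⟪δ, u⟫ ≤ ⟪β, u⟫}, ∀ r > (0:ℝ),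
      r ≤ Metric.infDist p {u : F | ∀ δ ∈ A, ⟪δ, u⟫ ≤ ⟪α, u⟫} →
      2 * c * r ≤ Metric.infDist p {u : F | ⟪α, u⟫ = ⟪β, u⟫} := by
  classical
  set G := A.image (fun δ => α - δ) with hG
  obtain ⟨m, hm, hhoff⟩ := hoffman G
  have hnorm : 0 < ‖β - α‖ := by
    rw [norm_pos_iff]; exact sub_ne_zero.mpr hne.symm
  refine ⟨1 / (2 * m * ‖β - α‖), by positivity, ?_⟩
  intro p hp r hr hrle
  set s : ℝ := ⟪β, p⟫ - ⟪α, p⟫ with hs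
  have hs0 : 0 ≤ s := sub_nonneg.mpr (hp α hα)
  have hVeq : {u : F | ∀ δ ∈ A, ⟪δ, u⟫ ≤ ⟪α, u⟫} = {u : F | ∀ g ∈ G, 0 ≤ ⟪g, u⟫} := by
    ext u
    simp only [Set.mem_setOf_eq, hG, Finset.mem_image]
    constructor
    · rintro h g ⟨δ, hδ, rfl⟩
      rw [inner_sub_left]
      linarith [h δ hδ]
    · intro h δ hδ
      have := h (α - δ) ⟨δ, hδ, rfl⟩
      rw [inner_sub_left] at this
      linarith
  have hps : ∀ g ∈ G, -⟪g, p⟫ ≤ s := by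
    intro g hg
    rw [hG, Finset.mem_image] at hg
    obtain ⟨δ, hδ, rfl⟩ := hg
    rw [inner_sub_left]
    have := hp δ hδ
    simp only [hs]
    linarith
  have hmain : Metric.infDist p {u : F | ∀ δ ∈ A, ⟪δ, u⟫ ≤ ⟪α, u⟫} ≤ m * s := by
    rw [hVeq]; exact hhoff p s hs0 hps
  have hrs : r ≤ m * s := hrle.trans hmain
  have hwall : s / ‖β - α‖ ≤ Metric.infDist p {u : F | ⟪α, u⟫ = ⟪β, u⟫} := by
    by_contra hcon
    push_neg at hcon
    obtain ⟨w, hw, hdw⟩ := (infDist_lt_iff ⟨0, by simp⟩).mp hcon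
    have hw' : ⟪α, w⟫ = ⟪β, w⟫ := hw
    have h5 : s = ⟪β - α, p - w⟫ := by
      rw [inner_sub_left, inner_sub_right, inner_sub_right]
      simp only [hs]
      linarith
    have h6 : ⟪β - α, p - w⟫ ≤ ‖β - α‖ * dist p w := by
      rw [dist_eq_norm]
      exact real_inner_le_norm _ _
    have : s < s := by
      calc s = ⟪β - α, p - w⟫ := h5
      _ ≤ ‖β - α‖ * dist p w := h6
      _ < ‖β - α‖ * (s / ‖β - α‖) := mul_lt_mul_of_pos_left hdw hnorm
      _ = s := by field_simp
    exact lt_irrefl s this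
  calc 2 * (1 / (2 * m * ‖β - α‖)) * r = r / (m * ‖β - α‖) := by
        field_simp
  _ ≤ (m * s) / (m * ‖β - α‖) := by gcongr
  _ = s / ‖β - α‖ := mul_div_mul_left s ‖β - α‖ hm.ne'
  _ ≤ Metric.infDist p {u : F | ⟪α, u⟫ = ⟪β, u⟫} := hwall


end Aux

/-- For a finite set `A ⊆ ℝⁿ`, with tropical regions
`V γ = {u | ∀ δ ∈ A, ⟪δ,u⟫ ≤ ⟪γ,u⟫}` and walls `H(α,β) = {u | ⟪α,u⟫ = ⟪β,u⟫}`, there is a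
constant `c > 0` such that any point of `V β` at distance at least `r` from `V α` is at
distance at least `2·c·r` from the wall `H(α,β)`. -/
theorem statement7 (n : ℕ) (hn : 1 ≤ n)
    (A : Finset (EuclideanSpace ℝ (Fin n))) :
    ∃ c > (0 : ℝ), ∀ α ∈ A, ∀ β ∈ A, α ≠ β →
      ∀ p ∈ {u : EuclideanSpace ℝ (Fin n) | ∀ δ ∈ A, ⟪δ, u⟫ ≤ ⟪β, u⟫},
        ∀ r > (0 : ℝ),
          r ≤ Metric.infDist p {u : EuclideanSpace ℝ (Fin n) | ∀ δ ∈ A, ⟪δ, u⟫ ≤ ⟪α, u⟫} →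
          2 * c * r ≤ Metric.infDist p {u : EuclideanSpace ℝ (Fin n) | ⟪α, u⟫ = ⟪β, u⟫} := by
  classical
  have key : ∀ q : EuclideanSpace ℝ (Fin n) × EuclideanSpace ℝ (Fin n), ∃ c : ℝ, 0 < c ∧ (q.1 ∈ A → q.2 ∈ A → q.1 ≠ q.2 →
      ∀ p ∈ {u : EuclideanSpace ℝ (Fin n) | ∀ δ ∈ A, ⟪δ, u⟫ ≤ ⟪q.2, u⟫}, ∀ r > (0:ℝ),
        r ≤ Metric.infDist p {u : EuclideanSpace ℝ (Fin n) | ∀ δ ∈ A, ⟪δ, u⟫ ≤ ⟪q.1, u⟫} →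
        2 * c * r ≤ Metric.infDist p {u : EuclideanSpace ℝ (Fin n) | ⟪q.1, u⟫ = ⟪q.2, u⟫}) := by
    intro q
    by_cases h : q.1 ∈ A ∧ q.2 ∈ A ∧ q.1 ≠ q.2
    · obtain ⟨c, hc, hprop⟩ := perpair A q.1 q.2 h.1 h.2.1 h.2.2
      exact ⟨c, hc, fun _ _ _ => hprop⟩
    · exact ⟨1, one_pos, fun h1 h2 h3 => absurd ⟨h1, h2, h3⟩ h⟩
  choose cf hcfpos hcf using key
  by_cases hP : ((A ×ˢ A).filter (fun q => q.1 ≠ q.2)).Nonempty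
  · refine ⟨((A ×ˢ A).filter (fun q => q.1 ≠ q.2)).inf' hP cf, ?_, ?_⟩
    · rw [gt_iff_lt, Finset.lt_inf'_iff]
      exact fun q _ => hcfpos q
    intro α hα β hβ hne p hp r hr hrle
    have hmem : (α, β) ∈ (A ×ˢ A).filter (fun q => q.1 ≠ q.2) :=
      Finset.mem_filter.mpr ⟨Finset.mem_product.mpr ⟨hα, hβ⟩, hne⟩
    have hle : ((A ×ˢ A).filter (fun q => q.1 ≠ q.2)).inf' hP cf ≤ cf (α, β) :=
      Finset.inf'_le cf hmem
    have hres := hcf (α, β) hα hβ hne p hp r hr hrle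
    have :=
      mul_le_mul_of_nonneg_right (mul_le_mul_of_nonneg_left hle (by norm_num : (0:ℝ) ≤ 2)) hr.le
    exact this.trans hres
  · refine ⟨1, one_pos, ?_⟩
    intro α hα β hβ hne
    exact absurd ⟨(α, β), Finset.mem_filter.mpr ⟨Finset.mem_product.mpr ⟨hα, hβ⟩, hne⟩⟩ hP
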